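/- Urn coupling marginals: under the urn coupling described in the context, the marginal law of b̂ is the weight-proportional law on Û, i.e. P(b̂ = x) = w(x)/‖Û‖ for every x ∈ Û. -/

import Mathlib

open Finset

/-- The joint law of the pair of balls `(b, b̂)` produced by the urn coupling:
`b` is drawn from the urn `U` proportionally to its weight; if `b ∈ C = U ∩ Û`, then with
probability `‖U‖/‖Û‖` one sets `b̂ = b` and otherwise `b̂` is drawn from `L = Û \ U`
proportionally to its weight; if `b ∈ U \ Û`, then `b̂` is drawn from `L` proportionally to
its weight. `jointUrnLaw w U Uh x y` is the probability of the outcome `(b, b̂) = (x, y)`. -/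
noncomputable def jointUrnLaw {α : Type*} [DecidableEq α] (w : α → ℝ) (U Uh : Finset α)
    (x y : α) : ℝ :=
  (if x ∈ U then w x / ∑ b ∈ U, w b else 0) *
    (if x ∈ U ∩ Uh then
        (if y = x then (∑ b ∈ U, w b) / ∑ b ∈ Uh, w b else 0)
          + (1 - (∑ b ∈ U, w b) / ∑ b ∈ Uh, w b)
            * (if y ∈ Uh \ U then w y / ∑ b ∈ Uh \ U, w b else 0)
      else (if y ∈ Uh \ U then w y / ∑ b ∈ Uh \ U, w b else 0))

/-- urn coupling marginals, equation (eq:check:marg2).  Under the urn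
coupling, the marginal law of `b̂` is the weight-proportional law on `Û`:
`P(b̂ = x) = w(x)/‖Û‖` for every `x ∈ Û`. -/
theorem jointUrnLaw_snd_marginal {α : Type*} [Fintype α] [DecidableEq α]
    (w : α → ℝ) (hw : ∀ b, 0 < w b)
    (U Uh : Finset α) (hU : U.Nonempty) (hUh : Uh.Nonempty)
    (hle : ∑ b ∈ U, w b ≤ ∑ b ∈ Uh, w b) (hL : (Uh \ U).Nonempty) :
    ∀ y ∈ Uh, ∑ x : α, jointUrnLaw w U Uh x y = w y / ∑ b ∈ Uh, w b := by
  intro y hy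
  have hS0 : 0 < ∑ b ∈ U, w b := Finset.sum_pos (fun b _ => hw b) hU
  have hT0 : 0 < ∑ b ∈ Uh, w b := Finset.sum_pos (fun b _ => hw b) hUh
  have hΛ0 : 0 < ∑ b ∈ Uh \ U, w b := Finset.sum_pos (fun b _ => hw b) hL
  set S := ∑ b ∈ U, w b with hSdef
  set T := ∑ b ∈ Uh, w b with hTdef
  set Λ := ∑ b ∈ Uh \ U, w b with hΛdef
  set c := ∑ b ∈ U ∩ Uh, w b with hcdef
  set d := ∑ b ∈ U \ Uh, w b with hddef
  have hcd : c + d = S := Finset.sum_inter_add_sum_sdiff U Uh w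
  have hcΛ : c + Λ = T := by
    rw [hcdef, Finset.inter_comm]
    exact Finset.sum_inter_add_sum_sdiff Uh U w
  -- restrict the sum to U
  have h1 : ∑ x : α, jointUrnLaw w U Uh x y = ∑ x ∈ U, jointUrnLaw w U Uh x y := by
    refine (Finset.sum_subset (Finset.subset_univ U) ?_).symm
    intro x _ hx
    simp [jointUrnLaw, hx]
  rw [h1, ← Finset.sum_inter_add_sum_sdiff U Uh (jointUrnLaw w U Uh · y)]
  by_cases hyU : y ∈ U
  · have hyL : y ∉ Uh \ U := by simp [hyU]
    have h2 : ∑ x ∈ U ∩ Uh, jointUrnLaw w U Uh x y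
        = ∑ x ∈ U ∩ Uh, if y = x then (w x / S) * (S / T) else 0 := by
      refine Finset.sum_congr rfl fun x hx => ?_
      have hxU : x ∈ U := (Finset.mem_inter.1 hx).1
      simp only [jointUrnLaw, if_pos hxU, if_pos hx, if_neg hyL, mul_zero, add_zero]
      split <;> simp [hSdef, hTdef]
    have h3 : ∑ x ∈ U \ Uh, jointUrnLaw w U Uh x y = 0 := by
      refine Finset.sum_eq_zero fun x hx => ?_
      have hxC : x ∉ U ∩ Uh := by
        simp only [Finset.mem_sdiff] at hx; simp [Finset.mem_inter, hx.2]
      simp [jointUrnLaw, hxC, hyL]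
    rw [h2, h3, Finset.sum_ite_eq, if_pos (Finset.mem_inter.2 ⟨hyU, hy⟩), add_zero]
    field_simp
  · have hyL : y ∈ Uh \ U := Finset.mem_sdiff.2 ⟨hy, hyU⟩
    have h2 : ∑ x ∈ U ∩ Uh, jointUrnLaw w U Uh x y
        = (c / S) * ((1 - S / T) * (w y / Λ)) := by
      rw [hcdef, Finset.sum_div, Finset.sum_mul]
      refine Finset.sum_congr rfl fun x hx => ?_
      have hxU : x ∈ U := (Finset.mem_inter.1 hx).1
      have hyx : y ≠ x := fun h => hyU (h ▸ hxU)
      simp [jointUrnLaw, hxU, hx, hyL, hyx, hSdef, hTdef, hΛdef]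
    have h3 : ∑ x ∈ U \ Uh, jointUrnLaw w U Uh x y = (d / S) * (w y / Λ) := by
      rw [hddef, Finset.sum_div, Finset.sum_mul]
      refine Finset.sum_congr rfl fun x hx => ?_
      have hxU : x ∈ U := (Finset.mem_sdiff.1 hx).1
      have hxC : x ∉ U ∩ Uh := by
        simp only [Finset.mem_sdiff] at hx; simp [Finset.mem_inter, hx.2]
      simp [jointUrnLaw, hxU, hxC, hyL, hSdef, hΛdef]
    rw [h2, h3]
    have hd : d = S - c := by linarith
    have hΛ : Λ = T - c := by linarith
    have hTc : T - c ≠ 0 := by rw [← hΛ]; exact ne_of_gt hΛ0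
    rw [hd, hΛ]
    field_simp
    ring
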